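/- Let f : ℝ^d → ℝ be twice differentiable with ρ-Lipschitz continuous Hessian, let α > 0, and let u, v ∈ ℝ^d with u ≠ v satisfy f(u) < f(v) + ∇f(v)ᵀ(u − v) − (α/2)‖u − v‖². If ‖u − v‖ ≤ α/(2ρ), then for every 0 < η ≤ α/ρ, setting δ = (u − v)/‖u − v‖, the point z ∈ {u + ηδ, u − ηδ} with smaller f-value satisfies f(z) ≤ f(u) − αη²/12. -/

import Mathlib

open scoped InnerProductSpace

section helpers

/-- If `p 0 = 0`, `q 0 = 0`, `p' = q`, `q' = r`, and `r ≤ 0` on `[0,b]`, then `p b ≤ 0`. -/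
lemma concave_aux (p q r : ℝ → ℝ) (b : ℝ) (hb : 0 ≤ b)
    (hp : ∀ t, HasDerivAt p (q t) t)
    (hq : ∀ t, HasDerivAt q (r t) t)
    (hp0 : p 0 = 0) (hq0 : q 0 = 0)
    (hr : ∀ t ∈ Set.Icc (0:ℝ) b, r t ≤ 0) :
    p b ≤ 0 := by
  have hqa : AntitoneOn q (Set.Icc 0 b) := by
    apply antitoneOn_of_deriv_nonpos (convex_Icc 0 b)
    · exact fun t _ => (hq t).continuousAt.continuousWithinAt
    · exact fun t _ => (hq t).differentiableAt.differentiableWithinAt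
    · intro t ht
      rw [interior_Icc] at ht
      rw [(hq t).deriv]
      exact hr t (Set.mem_Icc_of_Ioo ht)
  have hqle : ∀ t ∈ Set.Icc (0:ℝ) b, q t ≤ 0 := by
    intro t ht
    have := hqa (Set.left_mem_Icc.2 hb) ht ht.1
    simpa [hq0] using this
  have hpa : AntitoneOn p (Set.Icc 0 b) := by
    apply antitoneOn_of_deriv_nonpos (convex_Icc 0 b)
    · exact fun t _ => (hp t).continuousAt.continuousWithinAt
    · exact fun t _ => (hp t).differentiableAt.differentiableWithinAt
    · intro t ht
      rw [interior_Icc] at ht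
      rw [(hp t).deriv]
      exact hqle t (Set.mem_Icc_of_Ioo ht)
  have := hpa (Set.left_mem_Icc.2 hb) (Set.right_mem_Icc.2 hb) hb
  simpa [hp0] using this

variable {E : Type*} [NormedAddCommGroup E] [InnerProductSpace ℝ E] [CompleteSpace E]

lemma line_hasDerivAt (x δ : E) (t : ℝ) : HasDerivAt (fun s : ℝ => x + s • δ) δ t := by
  simpa using ((hasDerivAt_id t).smul_const δ).const_add x

lemma line_hasDerivAt_f (f : E → ℝ) (g : E → E) (hgrad : ∀ x, HasGradientAt f (g x) x)
    (x δ : E) (t : ℝ) :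
    HasDerivAt (fun s : ℝ => f (x + s • δ)) ⟪g (x + t • δ), δ⟫_ℝ t := by
  have := (hgrad (x + t • δ)).hasFDerivAt.comp_hasDerivAt t (line_hasDerivAt x δ t)
  simp at this
  exact this

lemma line_hasDerivAt_dg (g : E → E) (hess : E → E →L[ℝ] E)
    (hhess : ∀ x, HasFDerivAt g (hess x) x) (x δ : E) (t : ℝ) :
    HasDerivAt (fun s : ℝ => ⟪g (x + s • δ), δ⟫_ℝ) ⟪hess (x + t • δ) δ, δ⟫_ℝ t := by
  have h1 : HasDerivAt (fun s : ℝ => g (x + s • δ)) (hess (x + t • δ) δ) t :=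
    (hhess (x + t • δ)).comp_hasDerivAt t (line_hasDerivAt x δ t)
  have := h1.inner ℝ (hasDerivAt_const t δ)
  simpa using this

lemma quad_lip (hess : E → E →L[ℝ] E) (ρ : ℝ)
    (hhlip : ∀ x y, ‖hess x - hess y‖ ≤ ρ * ‖x - y‖) (δ : E) (hδ : ‖δ‖ = 1)
    (x y : E) : ⟪hess x δ, δ⟫_ℝ - ⟪hess y δ, δ⟫_ℝ ≤ ρ * ‖x - y‖ := by
  have h1 : ⟪(hess x - hess y) δ, δ⟫_ℝ ≤ ‖(hess x - hess y) δ‖ * ‖δ‖ := real_inner_le_norm _ _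
  have h2 : ‖(hess x - hess y) δ‖ ≤ ‖hess x - hess y‖ * ‖δ‖ :=
    (hess x - hess y).le_opNorm δ
  have h3 := hhlip x y
  rw [ContinuousLinearMap.sub_apply, inner_sub_left] at h1
  rw [ContinuousLinearMap.sub_apply] at h2
  rw [hδ, mul_one] at h1 h2
  linarith

lemma cubic_upper (f : E → ℝ) (g : E → E) (hess : E → E →L[ℝ] E) (ρ : ℝ)
    (hgrad : ∀ x, HasGradientAt f (g x) x) (hhess : ∀ x, HasFDerivAt g (hess x) x)
    (hhlip : ∀ x y, ‖hess x - hess y‖ ≤ ρ * ‖x - y‖)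
    (x δ : E) (hδ : ‖δ‖ = 1) (η : ℝ) (hη : 0 ≤ η) :
    f (x + η • δ) ≤ f x + η * ⟪g x, δ⟫_ℝ + η ^ 2 / 2 * ⟪hess x δ, δ⟫_ℝ + ρ * η ^ 3 / 6 := by
  set c1 := ⟪g x, δ⟫_ℝ with hc1
  set A := ⟪hess x δ, δ⟫_ℝ with hA
  have key := concave_aux
    (fun t => f (x + t • δ) - (f x + t * c1 + t ^ 2 / 2 * A + ρ * t ^ 3 / 6))
    (fun t => ⟪g (x + t • δ), δ⟫_ℝ - (c1 + t * A + ρ * t ^ 2 / 2))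
    (fun t => ⟪hess (x + t • δ) δ, δ⟫_ℝ - (A + ρ * t))
    η hη ?_ ?_ ?_ ?_ ?_
  · linarith [key]
  · intro t
    have hpoly : HasDerivAt (fun t : ℝ => f x + t * c1 + t ^ 2 / 2 * A + ρ * t ^ 3 / 6)
        (c1 + t * A + ρ * t ^ 2 / 2) t := by
      have h2 : HasDerivAt (fun t : ℝ => t ^ 2) (2 * t) t := by simpa using hasDerivAt_pow 2 t
      have h3 : HasDerivAt (fun t : ℝ => t ^ 3) (3 * t ^ 2) t := by simpa using hasDerivAt_pow 3 t
      have h := ((((hasDerivAt_id t).mul_const c1).const_add (f x)).add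
        ((h2.div_const 2).mul_const A)).add ((h3.const_mul ρ).div_const 6)
      refine h.congr_deriv ?_
      ring
    exact (line_hasDerivAt_f f g hgrad x δ t).sub hpoly
  · intro t
    have hpoly : HasDerivAt (fun t : ℝ => c1 + t * A + ρ * t ^ 2 / 2) (A + ρ * t) t := by
      have h2 : HasDerivAt (fun t : ℝ => t ^ 2) (2 * t) t := by simpa using hasDerivAt_pow 2 t
      have h := (((hasDerivAt_id t).mul_const A).const_add c1).add ((h2.const_mul ρ).div_const 2)
      refine h.congr_deriv ?_
      ring
    exact (line_hasDerivAt_dg g hess hhess x δ t).sub hpoly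
  · norm_num
  · norm_num [hc1]
  · intro t ht
    have := quad_lip hess ρ hhlip δ hδ (x + t • δ) x
    have hn : ‖x + t • δ - x‖ = t := by
      rw [add_sub_cancel_left, norm_smul, hδ, mul_one, Real.norm_eq_abs,
        abs_of_nonneg ht.1]
    rw [hn] at this
    linarith

lemma neg_curv (f : E → ℝ) (g : E → E) (hess : E → E →L[ℝ] E)
    (hgrad : ∀ x, HasGradientAt f (g x) x) (hhess : ∀ x, HasFDerivAt g (hess x) x)
    (α : ℝ) (v δ : E) (r : ℝ) (hr : 0 ≤ r)
    (hpair : f (v + r • δ) < f v + r * ⟪g v, δ⟫_ℝ - α / 2 * r ^ 2) :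
    ∃ θ ∈ Set.Icc (0:ℝ) r, ⟪hess (v + θ • δ) δ, δ⟫_ℝ < -α := by
  by_contra hcon
  push_neg at hcon
  set c1 := ⟪g v, δ⟫_ℝ with hc1
  have key := concave_aux
    (fun t => f v + t * c1 - α / 2 * t ^ 2 - f (v + t • δ))
    (fun t => c1 - α * t - ⟪g (v + t • δ), δ⟫_ℝ)
    (fun t => -α - ⟪hess (v + t • δ) δ, δ⟫_ℝ)
    r hr ?_ ?_ ?_ ?_ ?_
  · linarith
  · intro t
    have hpoly : HasDerivAt (fun t : ℝ => f v + t * c1 - α / 2 * t ^ 2) (c1 - α * t) t := by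
      have h2 : HasDerivAt (fun t : ℝ => t ^ 2) (2 * t) t := by simpa using hasDerivAt_pow 2 t
      have h := (((hasDerivAt_id t).mul_const c1).const_add (f v)).sub (h2.const_mul (α / 2))
      refine h.congr_deriv ?_
      ring
    exact hpoly.sub (line_hasDerivAt_f f g hgrad v δ t)
  · intro t
    have hpoly : HasDerivAt (fun t : ℝ => c1 - α * t) (-α) t := by
      have h := (hasDerivAt_const t c1).sub ((hasDerivAt_id t).const_mul α)
      refine h.congr_deriv ?_
      ring
    exact hpoly.sub (line_hasDerivAt_dg g hess hhess v δ t)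
  · norm_num
  · norm_num [hc1]
  · intro t ht
    have := hcon t ht
    linarith

end helpers

/-- Exploiting a witness pair (u, v) of non-convexity: a step of size η from u in the
direction ±(u − v)/‖u − v‖ decreases the function value by at least αη²/12. -/
theorem exploit_nc_pair_progress
    {d : ℕ} (f : EuclideanSpace ℝ (Fin d) → ℝ)
    (g : EuclideanSpace ℝ (Fin d) → EuclideanSpace ℝ (Fin d))
    (hess : EuclideanSpace ℝ (Fin d) →
      (EuclideanSpace ℝ (Fin d) →L[ℝ] EuclideanSpace ℝ (Fin d)))
    (ρ : ℝ) (hρ : 0 < ρ)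
    (hgrad : ∀ x, HasGradientAt f (g x) x)
    (hhess : ∀ x, HasFDerivAt g (hess x) x)
    (hhlip : ∀ x y, ‖hess x - hess y‖ ≤ ρ * ‖x - y‖)
    (α : ℝ) (hα : 0 < α)
    (u v : EuclideanSpace ℝ (Fin d)) (huv : u ≠ v)
    (hpair : f u < f v + ⟪g v, u - v⟫_ℝ - α / 2 * ‖u - v‖ ^ 2)
    (hdist : ‖u - v‖ ≤ α / (2 * ρ))
    (η : ℝ) (hη0 : 0 < η) (hη : η ≤ α / ρ) :
    min (f (u + η • (‖u - v‖⁻¹ • (u - v)))) (f (u - η • (‖u - v‖⁻¹ • (u - v))))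
      ≤ f u - α * η ^ 2 / 12 := by
  set w := u - v with hw
  have hwne : w ≠ 0 := sub_ne_zero.2 huv
  set r := ‖w‖ with hrdef
  have hr0 : 0 < r := norm_pos_iff.2 hwne
  set δ : EuclideanSpace ℝ (Fin d) := r⁻¹ • w with hδdef
  have hδ : ‖δ‖ = 1 := by
    rw [hδdef, norm_smul, norm_inv, norm_norm]
    field_simp
  have hrδ : r • δ = w := by
    rw [hδdef, smul_smul, mul_inv_cancel₀ (ne_of_gt hr0), one_smul]
  have huvr : v + r • δ = u := by
    rw [hrδ, hw]
    abel
  -- step 1: a point of curvature < -α on the segment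
  have hinner : ⟪g v, w⟫_ℝ = r * ⟪g v, δ⟫_ℝ := by
    rw [← hrδ, real_inner_smul_right]
  have hpair' : f (v + r • δ) < f v + r * ⟪g v, δ⟫_ℝ - α / 2 * r ^ 2 := by
    rw [huvr]
    linarith
  obtain ⟨θ, hθmem, hθ⟩ := neg_curv f g hess hgrad hhess α v δ r hr0.le hpair'
  -- step 2: curvature at u is < -α/2
  have hAu : ⟪hess u δ, δ⟫_ℝ < -α / 2 := by
    have hlip := quad_lip hess ρ hhlip δ hδ u (v + θ • δ)
    have hdiff : u - (v + θ • δ) = (r - θ) • δ := by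
      rw [sub_smul, hrδ, hw]
      abel
    have hnorm : ‖u - (v + θ • δ)‖ = r - θ := by
      rw [hdiff, norm_smul, hδ, mul_one, Real.norm_eq_abs, abs_of_nonneg (by linarith [hθmem.2])]
    rw [hnorm] at hlip
    have h1 : ρ * (r - θ) ≤ ρ * r := by
      apply mul_le_mul_of_nonneg_left _ hρ.le
      linarith [hθmem.1]
    have h2 : ρ * r ≤ α / 2 := by
      have := (le_div_iff₀' (by linarith : (0:ℝ) < 2 * ρ)).1 hdist
      calc ρ * r ≤ ρ * (α / (2 * ρ)) := mul_le_mul_of_nonneg_left hdist hρ.le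
        _ = α / 2 := by field_simp
    linarith
  -- step 3: cubic upper bounds in directions ±δ
  have h1 := cubic_upper f g hess ρ hgrad hhess hhlip u δ hδ η hη0.le
  have hδ' : ‖-δ‖ = 1 := by rw [norm_neg]; exact hδ
  have h2 := cubic_upper f g hess ρ hgrad hhess hhlip u (-δ) hδ' η hη0.le
  have hgneg : ⟪g u, -δ⟫_ℝ = -⟪g u, δ⟫_ℝ := by rw [inner_neg_right]
  have hhneg : ⟪hess u (-δ), -δ⟫_ℝ = ⟪hess u δ, δ⟫_ℝ := by
    rw [map_neg, inner_neg_neg]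
  have heq : u + η • (-δ) = u - η • δ := by
    rw [smul_neg, ← sub_eq_add_neg]
  rw [hgneg, hhneg, heq] at h2
  -- step 4: combine
  have hρη : ρ * η ≤ α := by
    have := (le_div_iff₀ hρ).1 hη
    linarith
  have hcube : ρ * η ^ 3 ≤ α * η ^ 2 := by
    have : ρ * η ^ 3 = (ρ * η) * η ^ 2 := by ring
    rw [this]
    exact mul_le_mul_of_nonneg_right hρη (sq_nonneg η)
  have hsum : f (u + η • δ) + f (u - η • δ) ≤ 2 * f u - α * η ^ 2 / 6 := by
    have hη2 : 0 < η ^ 2 := by positivity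
    nlinarith [h1, h2, hAu, hcube]
  have hmin : min (f (u + η • δ)) (f (u - η • δ)) ≤ f u - α * η ^ 2 / 12 := by
    rcases le_total (f (u + η • δ)) (f (u - η • δ)) with h | h
    · rw [min_eq_left h]; linarith
    · rw [min_eq_right h]; linarith
  exact hmin
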